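/- Let G = (V,E) be a finite simple graph, let P ⊆ E be a pseudoforest and let L ⊆ E be a linear forest with P ∩ L = ∅. Then there exists a matching M ⊆ P containing exactly one edge from each cycle of (V,P) such that L ∪ M¹ is a linear forest, where M¹ = { {u,v} ∈ M : deg_L(u) = 1 and deg_L(v) = 1 } and deg_L denotes degree in the subgraph (V,L). -/

import Mathlib

open SimpleGraph

/-- A simple graph is a pseudoforest if every connected component contains at most one
cycle, i.e., any two cycles lying in the same connected component have the same edges. -/
def GraphIsPseudoforest {V : Type*} (H : SimpleGraph V) : Prop :=
  ∀ ⦃u v : V⦄ (c : H.Walk u u) (d : H.Walk v v),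
    c.IsCycle → d.IsCycle → H.Reachable u v → ∀ e : Sym2 V, e ∈ c.edges ↔ e ∈ d.edges

/-- An edge set is a pseudoforest if every connected component of the graph it spans
contains at most one cycle. -/
def IsPseudoforestSet {V : Type*} (P : Set (Sym2 V)) : Prop :=
  GraphIsPseudoforest (SimpleGraph.fromEdgeSet P)

/-- A set of edges is a linear forest if it spans an acyclic graph in which every
vertex has degree at most two. -/
def IsLinearForestSet {V : Type*} (L : Set (Sym2 V)) : Prop :=
  (SimpleGraph.fromEdgeSet L).IsAcyclic ∧ ∀ v : V, {e ∈ L | v ∈ e}.ncard ≤ 2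

/-- A set of edges is a matching if no two of its edges share an endpoint. -/
def IsMatchingSet {V : Type*} (M : Set (Sym2 V)) : Prop :=
  ∀ e ∈ M, ∀ f ∈ M, e ≠ f → ∀ v : V, v ∈ e → v ∉ f


section Aux
set_option linter.unusedSectionVars false


variable {V : Type*} [Fintype V] [DecidableEq V]

/-- Membership of a vertex in an edge of a walk gives membership in the support. -/
lemma mem_support_of_mem_edge {H : SimpleGraph V} {a b : V} (p : H.Walk a b)
    {g : Sym2 V} (hg : g ∈ p.edges) {x : V} (hx : x ∈ g) : x ∈ p.support := by
  induction g using Sym2.ind with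
  | _ y z =>
    rcases Sym2.mem_iff.mp hx with rfl | rfl
    · exact p.fst_mem_support_of_mem_edges hg
    · exact p.snd_mem_support_of_mem_edges hg

/-- In a graph with all "edge-degrees" at most 2, two paths that start at the same
vertex coming from a common previous vertex end at the same degree-≤1 vertex. -/
lemma leafD (S : Set (Sym2 V)) (hdeg : ∀ x : V, {g ∈ S | x ∈ g}.ncard ≤ 2) :
    ∀ {x v : V} (p : (fromEdgeSet S).Walk x v) {w t : V}
      (q : (fromEdgeSet S).Walk x w),
      (fromEdgeSet S).Adj t x → p.IsPath → q.IsPath →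
      t ∉ p.support → t ∉ q.support →
      {g ∈ S | v ∈ g}.ncard ≤ 1 → {g ∈ S | w ∈ g}.ncard ≤ 1 → v = w := by
  intro x v p
  induction p with
  | nil =>
    intro w t q hadj hp hq htp htq hv hw
    rename_i xx
    cases q with
    | nil => rfl
    | @cons _ b _ h2 q' =>
      exfalso
      have h1 : s(t, xx) ∈ S := ((fromEdgeSet_adj _).mp hadj).1
      have h2' : s(xx, b) ∈ S := ((fromEdgeSet_adj _).mp h2).1
      by_cases heq : s(t, xx) = s(xx, b)
      · rcases Sym2.eq_iff.mp heq with ⟨h3, _⟩ | ⟨h3, _⟩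
        · exact hadj.ne h3
        · refine htq ?_
          rw [Walk.support_cons]
          exact List.mem_cons_of_mem _ (h3 ▸ q'.start_mem_support)
      · have : 1 < {g ∈ S | xx ∈ g}.ncard :=
          (Set.one_lt_ncard (Set.toFinite _)).mpr
            ⟨s(t, xx), ⟨h1, by simp⟩, s(xx, b), ⟨h2', by simp⟩, heq⟩
        omega
  | @cons xx y _ h p' ih =>
    intro w t q hadj hp hq htp htq hv hw
    have hty : t ≠ y := by
      intro hh
      refine htp ?_
      rw [Walk.support_cons]
      exact List.mem_cons_of_mem _ (hh ▸ p'.start_mem_support)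
    have h1 : s(t, xx) ∈ S := ((fromEdgeSet_adj _).mp hadj).1
    have h2 : s(xx, y) ∈ S := ((fromEdgeSet_adj _).mp h).1
    have d12 : s(t, xx) ≠ s(xx, y) := by
      intro hh
      rcases Sym2.eq_iff.mp hh with ⟨h3, _⟩ | ⟨h3, _⟩
      · exact hadj.ne h3
      · exact hty h3
    cases q with
    | nil =>
      exfalso
      have : 1 < {g ∈ S | xx ∈ g}.ncard :=
        (Set.one_lt_ncard (Set.toFinite _)).mpr
          ⟨s(t, xx), ⟨h1, by simp⟩, s(xx, y), ⟨h2, by simp⟩, d12⟩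
      omega
    | @cons _ z _ h4 q' =>
      have h3 : s(xx, z) ∈ S := ((fromEdgeSet_adj _).mp h4).1
      have htz : t ≠ z := by
        intro hh
        refine htq ?_
        rw [Walk.support_cons]
        exact List.mem_cons_of_mem _ (hh ▸ q'.start_mem_support)
      have hyz : y = z := by
        by_contra hne
        have d13 : s(t, xx) ≠ s(xx, z) := by
          intro hh
          rcases Sym2.eq_iff.mp hh with ⟨h5, _⟩ | ⟨h5, _⟩
          · exact hadj.ne h5
          · exact htz h5
        have d23 : s(xx, y) ≠ s(xx, z) := by
          intro hh
          rcases Sym2.eq_iff.mp hh with ⟨_, h5⟩ | ⟨h5, h6⟩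
          · exact hne h5
          · exact h.ne h6.symm
        have : 2 < {g ∈ S | xx ∈ g}.ncard :=
          (Set.two_lt_ncard_iff (Set.toFinite _)).mpr
            ⟨s(t, xx), s(xx, y), s(xx, z),
              ⟨h1, by simp⟩, ⟨h2, by simp⟩, ⟨h3, by simp⟩, d12, d13, d23⟩
        have := hdeg xx
        omega
      subst hyz
      have hp' := (Walk.cons_isPath_iff _ _).mp hp
      have hq' := (Walk.cons_isPath_iff _ _).mp hq
      exact ih q' h hp'.1 hq'.1 hp'.2 hq'.2 hv hw

/-- Three distinct degree-one vertices cannot lie in the same component of a graph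
with maximum degree two. -/
lemma leafE (S : Set (Sym2 V)) (hdeg : ∀ x : V, {g ∈ S | x ∈ g}.ncard ≤ 2)
    {u v w : V} (huv : u ≠ v) (huw : u ≠ w)
    (hu : {g ∈ S | u ∈ g}.ncard ≤ 1) (hv : {g ∈ S | v ∈ g}.ncard ≤ 1)
    (hw : {g ∈ S | w ∈ g}.ncard ≤ 1)
    (h1 : (fromEdgeSet S).Reachable u v) (h2 : (fromEdgeSet S).Reachable u w) :
    v = w := by
  obtain ⟨p0⟩ := h1
  obtain ⟨q0⟩ := h2
  obtain ⟨p, hp⟩ := p0.toPath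
  obtain ⟨q, hq⟩ := q0.toPath
  cases p with
  | nil => exact absurd rfl huv
  | @cons _ a _ ha p' =>
    cases q with
    | nil => exact absurd rfl huw
    | @cons _ b _ hb q' =>
      have e1 : s(u, a) ∈ S := ((fromEdgeSet_adj _).mp ha).1
      have e2 : s(u, b) ∈ S := ((fromEdgeSet_adj _).mp hb).1
      have hab : a = b := by
        by_contra hne
        have hd : s(u, a) ≠ s(u, b) := by
          intro hh
          rcases Sym2.eq_iff.mp hh with ⟨_, h5⟩ | ⟨h5, h6⟩
          · exact hne h5
          · exact ha.ne h6.symm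
        have : 1 < {g ∈ S | u ∈ g}.ncard :=
          (Set.one_lt_ncard (Set.toFinite _)).mpr
            ⟨s(u, a), ⟨e1, by simp⟩, s(u, b), ⟨e2, by simp⟩, hd⟩
        omega
      subst hab
      have hp' := (Walk.cons_isPath_iff _ _).mp hp
      have hq' := (Walk.cons_isPath_iff _ _).mp hq
      exact leafD S hdeg p' q' ha hp'.1 hq'.1 hp'.2 hq'.2 hv hw

lemma cycle_head {H : SimpleGraph V} {u : V} (c : H.Walk u u) (hc : c.IsCycle) :
    ∃ v w : V, v ∈ c.support ∧ w ∈ c.support ∧ u ≠ v ∧ v ≠ w ∧ u ≠ w ∧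
      s(u, v) ∈ c.edges ∧ s(v, w) ∈ c.edges := by
  cases c with
  | nil => exact absurd hc Walk.IsCycle.not_of_nil
  | @cons _ v _ h₁ c₁ =>
    cases c₁ with
    | nil => exact absurd rfl h₁.ne
    | @cons _ w _ h₂ c₂ =>
      have hnd := hc.edges_nodup
      rw [Walk.edges_cons, Walk.edges_cons, List.nodup_cons] at hnd
      have huw : u ≠ w := by
        rintro rfl
        exact hnd.1 (by rw [Sym2.eq_swap]; exact List.mem_cons_self)
      refine ⟨v, w, ?_, ?_, h₁.ne, h₂.ne, huw, ?_, ?_⟩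
      · rw [Walk.support_cons]; exact List.mem_cons_of_mem _ (Walk.start_mem_support _)
      · rw [Walk.support_cons, Walk.support_cons]
        exact List.mem_cons_of_mem _ (List.mem_cons_of_mem _ (Walk.start_mem_support _))
      · simp
      · simp

/-- Adding an edge between two degree-≤1 vertices in different components of a
linear forest yields a linear forest. -/
lemma extendLF (S : Set (Sym2 V)) {a b : V} (hab : a ≠ b)
    (hS : IsLinearForestSet S)
    (hna : {g ∈ S | a ∈ g}.ncard ≤ 1) (hnb : {g ∈ S | b ∈ g}.ncard ≤ 1)
    (hre : ¬ (SimpleGraph.fromEdgeSet S).Reachable a b) (hmem : s(a, b) ∉ S) :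
    IsLinearForestSet (insert s(a, b) S) := by
  constructor
  · intro z d hd
    by_cases he : s(a, b) ∈ d.edges
    · have hcyc := adj_and_reachable_delete_edges_iff_exists_cycle.mpr ⟨z, d, hd, he⟩
      refine hre (hcyc.2.mono ?_)
      intro x y hxy
      rw [deleteEdges_adj] at hxy
      obtain ⟨h1, h2⟩ := hxy
      rw [fromEdgeSet_adj] at h1
      refine (fromEdgeSet_adj _).mpr ⟨?_, h1.2⟩
      rcases h1.1 with h | h
      · exact absurd h h2
      · exact h
    · have hsub : ∀ g ∈ d.edges, g ∈ (SimpleGraph.fromEdgeSet S).edgeSet := by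
        intro g hg
        have h1 := d.edges_subset_edgeSet hg
        rw [edgeSet_fromEdgeSet] at h1 ⊢
        refine ⟨?_, h1.2⟩
        rcases h1.1 with h | h
        · exact absurd (h ▸ hg) he
        · exact h
      exact hS.1 _ (hd.transfer hsub)
  · intro z
    by_cases hz : z ∈ s(a, b)
    · have heq : {e ∈ insert s(a, b) S | z ∈ e} = insert s(a, b) {e ∈ S | z ∈ e} := by
        ext g
        simp only [Set.mem_setOf_eq, Set.mem_insert_iff]
        constructor
        · rintro ⟨h | h, h2⟩
          · exact Or.inl h
          · exact Or.inr ⟨h, h2⟩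
        · rintro (rfl | ⟨h1, h2⟩)
          · exact ⟨Or.inl rfl, hz⟩
          · exact ⟨Or.inr h1, h2⟩
      rw [heq, Set.ncard_insert_of_notMem (fun h => hmem h.1) (Set.toFinite _)]
      rcases Sym2.mem_iff.mp hz with rfl | rfl
      · omega
      · omega
    · have heq : {e ∈ insert s(a, b) S | z ∈ e} = {e ∈ S | z ∈ e} := by
        ext g
        simp only [Set.mem_setOf_eq, Set.mem_insert_iff]
        constructor
        · rintro ⟨h | h, h2⟩
          · exact absurd (h ▸ h2) hz
          · exact ⟨h, h2⟩
        · rintro ⟨h1, h2⟩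
          exact ⟨Or.inr h1, h2⟩
      rw [heq]
      exact hS.2 z

lemma key_acyclic (P L : Set (Sym2 V)) (hL : IsLinearForestSet L)
    (hnc : ∀ (u : V) (c : (SimpleGraph.fromEdgeSet P).Walk u u), ¬ c.IsCycle) :
    ∃ M, M ⊆ P ∧ IsMatchingSet M ∧
      (∀ f ∈ M, ∃ (z : V) (d : (SimpleGraph.fromEdgeSet P).Walk z z), d.IsCycle ∧ f ∈ d.edges) ∧
      (∀ ⦃u : V⦄ (c : (SimpleGraph.fromEdgeSet P).Walk u u), c.IsCycle →
          ∃! e : Sym2 V, e ∈ c.edges ∧ e ∈ M) ∧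
      IsLinearForestSet (L ∪ {e ∈ M | ∀ x ∈ e, {f ∈ L | x ∈ f}.ncard = 1}) := by
  refine ⟨∅, Set.empty_subset _, ?_, ?_, ?_, ?_⟩
  · intro f hf
    exact absurd hf (Set.notMem_empty f)
  · intro f hf
    exact absurd hf (Set.notMem_empty f)
  · intro u c hc
    exact absurd hc (hnc u c)
  · have h : L ∪ {e ∈ (∅ : Set (Sym2 V)) | ∀ x ∈ e, {f ∈ L | x ∈ f}.ncard = 1} = L := by
      ext g
      simp
    rw [h]
    exact hL

lemma key (n : ℕ) : ∀ (P L : Set (Sym2 V)), P.ncard ≤ n →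
    IsPseudoforestSet P → IsLinearForestSet L → P ∩ L = ∅ →
    ∃ M, M ⊆ P ∧ IsMatchingSet M ∧
      (∀ f ∈ M, ∃ (z : V) (d : (SimpleGraph.fromEdgeSet P).Walk z z), d.IsCycle ∧ f ∈ d.edges) ∧
      (∀ ⦃u : V⦄ (c : (SimpleGraph.fromEdgeSet P).Walk u u), c.IsCycle →
          ∃! e : Sym2 V, e ∈ c.edges ∧ e ∈ M) ∧
      IsLinearForestSet (L ∪ {e ∈ M | ∀ x ∈ e, {f ∈ L | x ∈ f}.ncard = 1}) := by
  induction n with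
  | zero =>
    intro P L hPn hP hL hdisj
    by_cases hnc : ∀ (u : V) (c : (SimpleGraph.fromEdgeSet P).Walk u u), ¬ c.IsCycle
    · exact key_acyclic P L hL hnc
    · exfalso
      push_neg at hnc
      obtain ⟨u₀, c₀, hc₀⟩ := hnc
      obtain ⟨v, w, hvs, hws, huv, hvw, huw, he1, he2⟩ := cycle_head c₀ hc₀
      have h1 := c₀.edges_subset_edgeSet he1
      rw [edgeSet_fromEdgeSet] at h1
      have hP0 : P = ∅ := (Set.ncard_eq_zero (Set.toFinite P)).mp (Nat.le_zero.mp hPn)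
      rw [hP0] at h1
      exact h1.1
  | succ m ih =>
    intro P L hPn hP hL hdisj
    by_cases hnc : ∀ (u : V) (c : (SimpleGraph.fromEdgeSet P).Walk u u), ¬ c.IsCycle
    · exact key_acyclic P L hL hnc
    push_neg at hnc
    obtain ⟨u₀, c₀, hc₀⟩ := hnc
    obtain ⟨v, w, hvs, hws, huv, hvw, huw, he1, he2⟩ := cycle_head c₀ hc₀
    have hCP : ∀ g ∈ c₀.edges, g ∈ P := by
      intro g hg
      have h1 := c₀.edges_subset_edgeSet hg
      rw [edgeSet_fromEdgeSet] at h1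
      exact h1.1
    set P' : Set (Sym2 V) := P \ {g | g ∈ c₀.edges} with hP'def
    have hle : SimpleGraph.fromEdgeSet P' ≤ SimpleGraph.fromEdgeSet P :=
      fromEdgeSet_mono Set.diff_subset
    have hup : ∀ {z1 z2 : V} (d : (SimpleGraph.fromEdgeSet P').Walk z1 z2),
        ∀ g ∈ d.edges, g ∈ (SimpleGraph.fromEdgeSet P).edgeSet :=
      fun d g hg => (edgeSet_mono hle) (d.edges_subset_edgeSet hg)
    -- cardinality decrease
    have hP'n : P'.ncard ≤ m := by
      have hss : P' ⊂ P := by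
        refine ⟨Set.diff_subset, fun hsub => ?_⟩
        exact (hsub (hCP _ he1)).2 he1
      have := Set.ncard_lt_ncard hss (Set.toFinite P)
      omega
    -- cycles of P' avoid c₀'s support
    have K1 : ∀ {z : V} (d : (SimpleGraph.fromEdgeSet P').Walk z z), d.IsCycle →
        ∀ x ∈ d.support, x ∉ c₀.support := by
      intro z d hd x hxd hxc
      have hd' : (d.transfer _ (hup d)).IsCycle := hd.transfer (hup d)
      have hxd' : x ∈ (d.transfer _ (hup d)).support := by
        rw [Walk.support_transfer]
        exact hxd
      have hreach : (SimpleGraph.fromEdgeSet P).Reachable z u₀ :=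
        ⟨((d.transfer _ (hup d)).takeUntil x hxd').append ((c₀.takeUntil x hxc).reverse)⟩
      have hiff := hP (d.transfer _ (hup d)) c₀ hd' hc₀ hreach
      have hne : d.edges ≠ [] := by
        have h3 := hd.three_le_length
        intro hnil
        rw [← Walk.length_edges, hnil] at h3
        simp at h3
      obtain ⟨g, hg⟩ := List.exists_mem_of_ne_nil _ hne
      have hg' : g ∈ (d.transfer _ (hup d)).edges := by
        rw [Walk.edges_transfer]
        exact hg
      have hgc : g ∈ c₀.edges := (hiff g).mp hg'
      have hgP' : g ∈ P' := by
        have h1 := d.edges_subset_edgeSet hg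
        rw [edgeSet_fromEdgeSet] at h1
        exact h1.1
      exact hgP'.2 hgc
    -- P' is a pseudoforest
    have hP' : IsPseudoforestSet P' := by
      intro z1 z2 d1 d2 h1 h2 hr g
      have := hP (d1.transfer _ (hup d1)) (d2.transfer _ (hup d2))
        (h1.transfer (hup d1)) (h2.transfer (hup d2)) (hr.mono hle) g
      rwa [Walk.edges_transfer, Walk.edges_transfer] at this
    obtain ⟨M', hM'P, hM'match, hM'cyc, hM'uniq, hM'lin⟩ :=
      ih P' L hP'n hP' hL (by
        apply Set.eq_empty_of_subset_empty
        rw [← hdisj]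
        exact Set.inter_subset_inter_left _ Set.diff_subset)
    -- edges of M' avoid c₀'s support
    have K1' : ∀ f ∈ M', ∀ x : V, x ∈ f → x ∉ c₀.support := by
      intro f hf x hxf hxc
      obtain ⟨z, d, hd, hfd⟩ := hM'cyc f hf
      exact K1 d hd x (mem_support_of_mem_edge d hfd hxf) hxc
    -- choose the edge e of the cycle
    obtain ⟨e, heC, helin⟩ : ∃ e, e ∈ c₀.edges ∧
        IsLinearForestSet (L ∪ {f ∈ insert e M' | ∀ x ∈ f, {g ∈ L | x ∈ g}.ncard = 1}) := by
      by_cases hbad : ∀ g ∈ c₀.edges, ∀ x ∈ g, {f ∈ L | x ∈ f}.ncard = 1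
      · -- all endpoints on the cycle have degree one in L
        set L' : Set (Sym2 V) :=
          L ∪ {f ∈ M' | ∀ x ∈ f, {g ∈ L | x ∈ g}.ncard = 1} with hL'def
        have hsupnc : ∀ x ∈ c₀.support, {f ∈ L' | x ∈ f} = {f ∈ L | x ∈ f} := by
          intro x hx
          ext f
          simp only [hL'def, Set.mem_setOf_eq, Set.mem_union]
          constructor
          · rintro ⟨h | h, h2⟩
            · exact ⟨h, h2⟩
            · exact absurd hx (K1' f h.1 x h2)
          · rintro ⟨h1, h2⟩
            exact ⟨Or.inl h1, h2⟩
        have hu₀s : u₀ ∈ c₀.support := c₀.start_mem_support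
        have hnu : {f ∈ L' | u₀ ∈ f}.ncard = 1 := by
          rw [hsupnc u₀ hu₀s]
          exact hbad _ he1 u₀ (by simp)
        have hnv : {f ∈ L' | v ∈ f}.ncard = 1 := by
          rw [hsupnc v hvs]
          exact hbad _ he1 v (by simp)
        have hnw : {f ∈ L' | w ∈ f}.ncard = 1 := by
          rw [hsupnc w hws]
          exact hbad _ he2 w (by simp)
        have hdeg : ∀ x : V, {f ∈ L' | x ∈ f}.ncard ≤ 2 := hM'lin.2
        have hL'lin : IsLinearForestSet L' := hM'lin
        have hgen : ∀ a b : V, a ≠ b → s(a, b) ∈ c₀.edges →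
            {f ∈ L' | a ∈ f}.ncard = 1 → {f ∈ L' | b ∈ f}.ncard = 1 →
            ¬ (SimpleGraph.fromEdgeSet L').Reachable a b →
            ∃ e, e ∈ c₀.edges ∧
              IsLinearForestSet
                (L ∪ {f ∈ insert e M' | ∀ x ∈ f, {g ∈ L | x ∈ g}.ncard = 1}) := by
          intro a b hab heC hna2 hnb2 hre
          have hmemL' : s(a, b) ∉ L' := by
            intro hmem
            rcases hmem with h | h
            · have : s(a, b) ∈ P ∩ L := ⟨hCP _ heC, h⟩
              rw [hdisj] at this
              exact this
            · exact (hM'P h.1).2 heC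
          have hext := extendLF L' hab hL'lin (le_of_eq hna2) (le_of_eq hnb2) hre hmemL'
          refine ⟨s(a, b), heC, ?_⟩
          have hcond : ∀ x ∈ s(a, b), {g ∈ L | x ∈ g}.ncard = 1 := hbad _ heC
          have heq : L ∪ {f ∈ insert s(a, b) M' | ∀ x ∈ f, {g ∈ L | x ∈ g}.ncard = 1}
              = insert s(a, b) L' := by
            have h1 : {f ∈ insert s(a, b) M' | ∀ x ∈ f, {g ∈ L | x ∈ g}.ncard = 1}
                = insert s(a, b) {f ∈ M' | ∀ x ∈ f, {g ∈ L | x ∈ g}.ncard = 1} := by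
              ext f
              simp only [Set.mem_setOf_eq, Set.mem_insert_iff]
              constructor
              · rintro ⟨rfl | h, h2⟩
                · exact Or.inl rfl
                · exact Or.inr ⟨h, h2⟩
              · rintro (rfl | ⟨hf1, hf2⟩)
                · exact ⟨Or.inl rfl, hcond⟩
                · exact ⟨Or.inr hf1, hf2⟩
            rw [h1, hL'def, Set.union_insert]
          rw [heq]
          exact hext
        by_cases hr1 : (SimpleGraph.fromEdgeSet L').Reachable u₀ v
        · by_cases hr2 : (SimpleGraph.fromEdgeSet L').Reachable v w
          · exact absurd
              (leafE L' hdeg huv.symm hvw (le_of_eq hnv) (le_of_eq hnu) (le_of_eq hnw)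
                hr1.symm hr2) huw
          · exact hgen v w hvw he2 hnv hnw hr2
        · exact hgen u₀ v huv he1 hnu hnv hr1
      · push_neg at hbad
        obtain ⟨g₀, hg₀, x₀, hx₀, hxne⟩ := hbad
        refine ⟨g₀, hg₀, ?_⟩
        have heq : {f ∈ insert g₀ M' | ∀ x ∈ f, {g ∈ L | x ∈ g}.ncard = 1}
            = {f ∈ M' | ∀ x ∈ f, {g ∈ L | x ∈ g}.ncard = 1} := by
          ext f
          simp only [Set.mem_setOf_eq, Set.mem_insert_iff]
          constructor
          · rintro ⟨rfl | h, h2⟩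
            · exact absurd (h2 x₀ hx₀) hxne
            · exact ⟨h, h2⟩
          · rintro ⟨hf1, hf2⟩
            exact ⟨Or.inr hf1, hf2⟩
        rw [heq]
        exact hM'lin
    -- assemble
    have hevert : ∀ x ∈ e, x ∈ c₀.support := fun x hx => mem_support_of_mem_edge c₀ heC hx
    refine ⟨insert e M', ?_, ?_, ?_, ?_, helin⟩
    · intro f hf
      rcases Set.mem_insert_iff.mp hf with rfl | hf
      · exact hCP _ heC
      · exact (hM'P hf).1
    · intro f hf g hg hne x hxf
      rcases Set.mem_insert_iff.mp hf with hfe | hfM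
      · rcases Set.mem_insert_iff.mp hg with hge | hgM
        · exact absurd (hfe.trans hge.symm) hne
        · exact fun hxg => K1' g hgM x hxg (hevert x (hfe ▸ hxf))
      · rcases Set.mem_insert_iff.mp hg with hge | hgM
        · exact fun hxg => K1' f hfM x hxf (hevert x (hge ▸ hxg))
        · exact hM'match f hfM g hgM hne x hxf
    · intro f hf
      rcases Set.mem_insert_iff.mp hf with rfl | hf
      · exact ⟨u₀, c₀, hc₀, heC⟩
      · obtain ⟨z, d, hd, hfd⟩ := hM'cyc f hf
        exact ⟨z, d.transfer _ (hup d), hd.transfer (hup d), by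
          rw [Walk.edges_transfer]; exact hfd⟩
    · intro z d hd
      by_cases hdc : ∃ x, x ∈ d.support ∧ x ∈ c₀.support
      · obtain ⟨x, hxd, hxc⟩ := hdc
        have hreach : (SimpleGraph.fromEdgeSet P).Reachable z u₀ :=
          ⟨(d.takeUntil x hxd).append ((c₀.takeUntil x hxc).reverse)⟩
        have hiff := hP d c₀ hd hc₀ hreach
        refine ⟨e, ⟨(hiff e).mpr heC, Set.mem_insert _ _⟩, ?_⟩
        rintro g ⟨hgd, hgM⟩
        rcases Set.mem_insert_iff.mp hgM with rfl | hgM'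
        · rfl
        · exact absurd ((hiff g).mp hgd) (hM'P hgM').2
      · push_neg at hdc
        have hdP' : ∀ g ∈ d.edges, g ∈ (SimpleGraph.fromEdgeSet P').edgeSet := by
          intro g hg
          have h1 := d.edges_subset_edgeSet hg
          rw [edgeSet_fromEdgeSet] at h1 ⊢
          refine ⟨⟨h1.1, ?_⟩, h1.2⟩
          intro hgC
          exact hdc g.out.1 (mem_support_of_mem_edge d hg (Sym2.out_fst_mem g))
            (mem_support_of_mem_edge c₀ hgC (Sym2.out_fst_mem g))
        obtain ⟨f, ⟨hf1, hf2⟩, hfu⟩ := hM'uniq (d.transfer _ hdP') (hd.transfer hdP')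
        rw [Walk.edges_transfer] at hf1
        refine ⟨f, ⟨hf1, Set.mem_insert_of_mem _ hf2⟩, ?_⟩
        rintro g ⟨hgd, hgM⟩
        rcases Set.mem_insert_iff.mp hgM with rfl | hgM'
        · exfalso
          refine hdc _ (mem_support_of_mem_edge d hgd (Sym2.out_fst_mem _)) ?_
          exact mem_support_of_mem_edge c₀ heC (Sym2.out_fst_mem _)
        · exact hfu g ⟨by rw [Walk.edges_transfer]; exact hgd, hgM'⟩

end Aux

/-- Given a pseudoforest `P` and a linear forest `L` disjoint from it, there is a
matching `M ⊆ P` containing exactly one edge from each cycle of `(V, P)` such that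
`L ∪ M¹` is a linear forest, where `M¹` consists of those edges of `M` both of whose
endpoints have degree one in `(V, L)`. -/
theorem exists_matching_compatible_with_linear_forest {V : Type*} [Fintype V]
    [DecidableEq V] (G : SimpleGraph V) (P L : Set (Sym2 V)) (hPE : P ⊆ G.edgeSet)
    (hLE : L ⊆ G.edgeSet) (hP : IsPseudoforestSet P) (hL : IsLinearForestSet L)
    (hdisj : P ∩ L = ∅) :
    ∃ M ⊆ P, IsMatchingSet M ∧
      (∀ ⦃u : V⦄ (c : (SimpleGraph.fromEdgeSet P).Walk u u), c.IsCycle →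
        ∃! e : Sym2 V, e ∈ c.edges ∧ e ∈ M) ∧
      IsLinearForestSet (L ∪ {e ∈ M | ∀ x ∈ e, {f ∈ L | x ∈ f}.ncard = 1}) := by
  obtain ⟨M, hMP, hmatch, _, huniq, hlin⟩ := key P.ncard P L le_rfl hP hL hdisj
  exact ⟨M, hMP, hmatch, huniq, hlin⟩
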